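/- Let G be a finite connected chordal simple graph, and let 𝒞 be the set of maximal cliques of G. Then there exists a tree T whose vertex set is 𝒞 such that for any two maximal cliques C and C′ in 𝒞 and any maximal clique C″ lying on the (unique) path in T between C and C′, one has C ∩ C′ ⊆ C″. -/

import Mathlib

/-- A finite simple graph is chordal if every cycle of length at least four has a chord,
i.e., an edge of the graph joining two vertices of the cycle that is not an edge of the cycle. -/
def SimpleGraph.IsChordal {V : Type*} (G : SimpleGraph V) : Prop :=
  ∀ ⦃v : V⦄ (w : G.Walk v v), w.IsCycle → 4 ≤ w.length →
    ∃ x y, x ∈ w.support ∧ y ∈ w.support ∧ G.Adj x y ∧ s(x, y) ∉ w.edges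

/-- A maximal clique: a clique not properly contained in another clique. -/
def SimpleGraph.IsMaxClique {V : Type*} (G : SimpleGraph V) (C : Finset V) : Prop :=
  G.IsClique (C : Set V) ∧ ∀ D : Finset V, G.IsClique (D : Set V) → C ⊆ D → C = D

open SimpleGraph

namespace CliqueTree

variable {V : Type*} [Fintype V] [DecidableEq V]

/-- The graph `G` restricted to the vertex set `s` (vertices outside `s` become isolated). -/
def Gr (G : SimpleGraph V) (s : Finset V) : SimpleGraph V where
  Adj x y := x ∈ s ∧ y ∈ s ∧ G.Adj x y
  symm := ⟨fun x y ⟨hx, hy, h⟩ => ⟨hy, hx, h.symm⟩⟩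
  loopless := ⟨fun x ⟨_, _, h⟩ => G.irrefl h⟩

/-- A maximal clique within vertex set `s`. -/
def MaxCliqueIn (G : SimpleGraph V) (s C : Finset V) : Prop :=
  C ⊆ s ∧ G.IsClique (C : Set V) ∧
    ∀ D : Finset V, D ⊆ s → G.IsClique (D : Set V) → C ⊆ D → C = D

/-- A simplicial vertex within vertex set `s`. -/
def SimplicialIn (G : SimpleGraph V) (s : Finset V) (v : V) : Prop :=
  v ∈ s ∧ ∀ x ∈ s, ∀ y ∈ s, G.Adj v x → G.Adj v y → x ≠ y → G.Adj x y

/-- Running intersection property of a list of cliques. -/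
def RIP (L : List (Finset V)) : Prop :=
  ∀ i, 0 < i → ∀ h : i < L.length, ∃ j, ∃ _hj : j < i,
    ∀ m, ∀ _hm : m < i, (L[i]'h) ∩ (L[m]'(by omega)) ⊆ L[j]'(by omega)

lemma exists_maxCliqueIn_superset (G : SimpleGraph V) {s C0 : Finset V} (hC0s : C0 ⊆ s)
    (hC0 : G.IsClique (C0 : Set V)) : ∃ D, MaxCliqueIn G s D ∧ C0 ⊆ D := by
  classical
  have hne : (s.powerset.filter (fun D : Finset V => G.IsClique (D : Set V) ∧ C0 ⊆ D)).Nonempty :=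
    ⟨C0, by simp [hC0s, hC0]⟩
  obtain ⟨D, hD, hmax⟩ := Finset.exists_max_image _ Finset.card hne
  simp only [Finset.mem_filter, Finset.mem_powerset] at hD
  refine ⟨D, ⟨hD.1, hD.2.1, ?_⟩, hD.2.2⟩
  intro E hEs hE hDE
  have hEmem : E ∈ s.powerset.filter (fun D : Finset V => G.IsClique (D : Set V) ∧ C0 ⊆ D) := by
    simp only [Finset.mem_filter, Finset.mem_powerset]
    exact ⟨hEs, hE, hD.2.2.trans hDE⟩
  exact Finset.eq_of_subset_of_card_le hDE (hmax E hEmem)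

lemma maxCliqueIn_nonempty {G : SimpleGraph V} {s C : Finset V} (hs : s.Nonempty)
    (hC : MaxCliqueIn G s C) : C.Nonempty := by
  rcases hs with ⟨z, hz⟩
  rcases Finset.eq_empty_or_nonempty C with rfl | h
  · exfalso
    have := hC.2.2 {z} (by simpa using hz) (by simp) (by simp)
    exact (Finset.singleton_ne_empty z) this.symm
  · exact h


omit [Fintype V] in
lemma edge_getVert_mem {H : SimpleGraph V} {x y : V} (p : H.Walk x y) :
    ∀ i, i < p.length → s(p.getVert i, p.getVert (i + 1)) ∈ p.edges := by
  induction p with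
  | nil => intro i hi; simp at hi
  | cons h q ih =>
    intro i hi
    cases i with
    | zero =>
      simp [Walk.getVert_zero, Walk.getVert_cons_succ]
    | succ n =>
      simp only [Walk.getVert_cons_succ, Walk.edges_cons, List.mem_cons]
      exact Or.inr (ih n (by simpa using hi))

omit [Fintype V] in
lemma getVert_length_takeUntil {H : SimpleGraph V} {x y u : V} (p : H.Walk x y)
    (hu : u ∈ p.support) : p.getVert (p.takeUntil u hu).length = u := by
  have key : ∀ (q1 : H.Walk x u) (q2 : H.Walk u y),
      (q1.append q2).getVert q1.length = u := by
    intro q1 q2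
    rw [Walk.getVert_append]
    simp
  have := key (p.takeUntil u hu) (p.dropUntil u hu)
  rwa [p.take_spec hu] at this

omit [Fintype V] in
lemma length_dropUntil_eq {H : SimpleGraph V} {x y u : V} (p : H.Walk x y)
    (hu : u ∈ p.support) :
    (p.takeUntil u hu).length + (p.dropUntil u hu).length = p.length := by
  have := congrArg Walk.length (p.take_spec hu)
  rwa [Walk.length_append] at this

omit [Fintype V] in
lemma no_chord_aux {H : SimpleGraph V} {x y u v : V} (p : H.Walk x y)
    (hmin : ∀ q : H.Walk x y, p.length ≤ q.length)
    (hu : u ∈ p.support) (hv : v ∈ p.support) (hadj : H.Adj u v)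
    (hle : (p.takeUntil u hu).length ≤ (p.takeUntil v hv).length) :
    s(u, v) ∈ p.edges := by
  set du := (p.takeUntil u hu).length with hdu
  set dv := (p.takeUntil v hv).length with hdv
  have h1 : p.getVert du = u := getVert_length_takeUntil p hu
  have h2 : p.getVert dv = v := getVert_length_takeUntil p hv
  have hdul : du ≤ p.length := Walk.length_takeUntil_le p hu
  have hdvl : dv ≤ p.length := Walk.length_takeUntil_le p hv
  rcases lt_trichotomy (du + 1) dv with hlt | heq | hgt
  · exfalso
    have hdrop : dv + (p.dropUntil v hv).length = p.length := length_dropUntil_eq p hv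
    have hq := hmin ((p.takeUntil u hu).append (Walk.cons hadj (p.dropUntil v hv)))
    rw [Walk.length_append, Walk.length_cons] at hq
    omega
  · rw [← h1, ← h2, ← heq]
    exact edge_getVert_mem p du (by omega)
  · have : du = dv := by omega
    rw [this, h2] at h1
    exact absurd h1.symm hadj.ne

omit [Fintype V] in
lemma no_chord_of_min_length {H : SimpleGraph V} {x y u v : V} (p : H.Walk x y)
    (hmin : ∀ q : H.Walk x y, p.length ≤ q.length)
    (hu : u ∈ p.support) (hv : v ∈ p.support) (hadj : H.Adj u v) :
    s(u, v) ∈ p.edges := by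
  rcases le_total (p.takeUntil u hu).length (p.takeUntil v hv).length with h | h
  · exact no_chord_aux p hmin hu hv hadj h
  · rw [Sym2.eq_swap]
    exact no_chord_aux p hmin hv hu hadj.symm h


omit [Fintype V] [DecidableEq V] in
lemma Gr_support_mem' {G : SimpleGraph V} {m : Finset V} {c d : V} (p : (Gr G m).Walk c d) :
    ∀ z ∈ p.support, z = c ∨ z ∈ m := by
  induction p with
  | nil => intro z hz; simp at hz; exact Or.inl hz
  | cons h q ih =>
    intro z hz
    rw [Walk.support_cons] at hz
    rcases List.mem_cons.mp hz with rfl | hz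
    · exact Or.inl rfl
    · rcases ih z hz with rfl | hm
      · exact Or.inr h.2.1
      · exact Or.inr hm

omit [Fintype V] [DecidableEq V] in
lemma Gr_reachable_transfer {G : SimpleGraph V} {m m' : Finset V} {c d : V}
    (p : (Gr G m).Walk c d) (h : ∀ z ∈ p.support, z ∈ m') : (Gr G m').Reachable c d := by
  refine ⟨p.transfer (Gr G m') ?_⟩
  intro e he
  induction e with
  | h x y =>
    have hadj : (Gr G m).Adj x y := p.adj_of_mem_edges he
    exact ⟨h x (Walk.fst_mem_support_of_mem_edges p he),
      h y (Walk.snd_mem_support_of_mem_edges p he), hadj.2.2⟩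

omit [Fintype V] [DecidableEq V] in
lemma Gr_mem_of_reachable {G : SimpleGraph V} {m : Finset V} {c d : V} (hc : c ∈ m)
    (h : (Gr G m).Reachable c d) : d ∈ m := by
  rcases h with ⟨p⟩
  rcases Gr_support_mem' p d p.end_mem_support with rfl | hm
  · exact hc
  · exact hm

omit [Fintype V] in
/-- Extract a neighbor of `x` reachable from `c` avoiding `x`. -/
lemma neighbor_extract {G : SimpleGraph V} {m : Finset V} {c x : V} (p : (Gr G m).Walk c x)
    (hcx : c ≠ x) (hcount : p.support.count x = 1) :
    ∃ u, G.Adj x u ∧ (Gr G (m.erase x)).Reachable c u := by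
  obtain ⟨d, hadj, q, heq⟩ := (p.reverse).exists_eq_cons_of_ne hcx.symm
  have hxq : x ∉ q.support := by
    have h1 : (p.reverse).support.count x = 1 := by
      rw [Walk.support_reverse, List.count_reverse]; exact hcount
    rw [heq, Walk.support_cons, List.count_cons_self] at h1
    exact fun hmem => by have := List.count_pos_iff.mpr hmem; omega
  refine ⟨d, hadj.2.2, ?_⟩
  have hr : (Gr G (m.erase x)).Reachable d c := by
    refine Gr_reachable_transfer q ?_
    intro z hz
    have hzx : z ≠ x := fun h => hxq (h ▸ hz)
    rcases Gr_support_mem' q z hz with rfl | hm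
    · exact Finset.mem_erase.mpr ⟨hzx, hadj.2.1⟩
    · exact Finset.mem_erase.mpr ⟨hzx, hm⟩
  exact hr.symm


omit [Fintype V] in
lemma min_path_spec {H : SimpleGraph V} {x y : V} (h : H.Reachable x y) :
    ∃ p : H.Walk x y, p.IsPath ∧ ∀ q : H.Walk x y, p.length ≤ q.length := by
  obtain ⟨p', hp'⟩ := h.exists_walk_length_eq_dist
  refine ⟨p'.bypass, p'.bypass_isPath, fun q => ?_⟩
  calc p'.bypass.length ≤ p'.length := Walk.length_bypass_le p'
    _ ≤ q.length := hp' ▸ dist_le q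

omit [Fintype V] in
lemma two_le_min_path_length {H : SimpleGraph V} {x y : V} {p : H.Walk x y}
    (hne : x ≠ y) (hnadj : ¬H.Adj x y) : 2 ≤ p.length := by
  have h0 : p.length ≠ 0 := fun hl => hne (p.eq_of_length_eq_zero hl)
  have h1 : p.length ≠ 1 := by
    intro hl
    have h2 := p.adj_getVert_succ (i := 0) (by omega)
    rw [Walk.getVert_zero, p.getVert_of_length_le (by omega : p.length ≤ 0 + 1)] at h2
    exact hnadj h2
  omega

/-- Key chord argument: if `x` and `y` are joined through two "sides" `P` and `Q` that are
disjoint with no edges between them, then chordality forces `x` and `y` adjacent. -/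
lemma adj_of_two_sides {G : SimpleGraph V} (hchord : G.IsChordal) {x y : V} {P Q : Finset V}
    (hxy : x ≠ y) (hxP : x ∉ P) (hyP : y ∉ P) (hxQ : x ∉ Q) (hyQ : y ∉ Q)
    (hPQdisj : ∀ z, z ∈ P → z ∈ Q → False)
    (hPQ : ∀ p ∈ P, ∀ q ∈ Q, ¬G.Adj p q)
    (h1 : (Gr G (P ∪ {x, y})).Reachable x y) (h2 : (Gr G (Q ∪ {x, y})).Reachable x y) :
    G.Adj x y := by
  by_contra hnadj
  obtain ⟨p1, hp1path, hp1min⟩ := min_path_spec h1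
  obtain ⟨p2, hp2path, hp2min⟩ := min_path_spec h2.symm
  have hxPxy : x ∈ P ∪ {x, y} := by simp
  have hyQxy : y ∈ Q ∪ {x, y} := by simp
  have hsupp1 : ∀ z ∈ p1.support, z ∈ P ∪ {x, y} := fun z hz =>
    (Gr_support_mem' p1 z hz).elim (fun h => h ▸ hxPxy) id
  have hsupp2 : ∀ z ∈ p2.support, z ∈ Q ∪ {x, y} := fun z hz =>
    (Gr_support_mem' p2 z hz).elim (fun h => h ▸ hyQxy) id
  have hlen1 : 2 ≤ p1.length := two_le_min_path_length hxy (fun h => hnadj h.2.2)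
  have hlen2 : 2 ≤ p2.length := two_le_min_path_length hxy.symm (fun h => hnadj h.2.2.symm)
  -- transfer to G
  have ht1 : ∀ e ∈ p1.edges, e ∈ G.edgeSet := by
    intro e he
    induction e with
    | h u v => exact (p1.adj_of_mem_edges he).2.2
  have ht2 : ∀ e ∈ p2.edges, e ∈ G.edgeSet := by
    intro e he
    induction e with
    | h u v => exact (p2.adj_of_mem_edges he).2.2
  set q1 := p1.transfer G ht1 with hq1
  set q2 := p2.transfer G ht2 with hq2
  set c : G.Walk x x := q1.append q2 with hc
  have hcsupp : c.support = p1.support ++ p2.support.tail := by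
    rw [hc, Walk.support_append, Walk.support_transfer, Walk.support_transfer]
  have hcedges : c.edges = p1.edges ++ p2.edges := by
    rw [hc, Walk.edges_append, Walk.edges_transfer, Walk.edges_transfer]
  have hclen : c.length = p1.length + p2.length := by
    rw [hc, Walk.length_append, Walk.length_transfer, Walk.length_transfer]
  -- support intersection is {x, y}
  have hinter : ∀ z, z ∈ p1.support → z ∈ p2.support → z = x ∨ z = y := by
    intro z hz1 hz2
    have m1 := hsupp1 z hz1
    have m2 := hsupp2 z hz2
    simp only [Finset.mem_union, Finset.mem_insert, Finset.mem_singleton] at m1 m2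
    rcases m1 with h | h
    · rcases m2 with h' | h'
      · exact absurd h' (fun h'' => hPQdisj z h h'')
      · exact h'
    · exact h
  -- no common edges
  have hnocommon : ∀ e, e ∈ p1.edges → e ∈ p2.edges → False := by
    intro e he1 he2
    induction e with
    | h u v =>
      have hadj : G.Adj u v := (p1.adj_of_mem_edges he1).2.2
      have hu1 := Walk.fst_mem_support_of_mem_edges p1 he1
      have hv1 := Walk.snd_mem_support_of_mem_edges p1 he1
      have hu2 := Walk.fst_mem_support_of_mem_edges p2 he2
      have hv2 := Walk.snd_mem_support_of_mem_edges p2 he2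
      rcases hinter u hu1 hu2 with rfl | rfl <;> rcases hinter v hv1 hv2 with rfl | rfl
      · exact hadj.ne rfl
      · exact hnadj hadj
      · exact hnadj hadj.symm
      · exact hadj.ne rfl
  -- x not in tail of p1.support, y not in tail of p2.support
  have hx_tail1 : x ∉ p1.support.tail := by
    have := hp1path.support_nodup
    rw [p1.support_eq_cons] at this
    exact (List.nodup_cons.mp this).1
  have hy_tail2 : y ∉ p2.support.tail := by
    have := hp2path.support_nodup
    rw [p2.support_eq_cons] at this
    exact (List.nodup_cons.mp this).1
  have hcycle : c.IsCycle := by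
    rw [Walk.isCycle_def]
    refine ⟨⟨?_⟩, ?_, ?_⟩
    · rw [hcedges]
      exact List.Nodup.append hp1path.isTrail.edges_nodup hp2path.isTrail.edges_nodup
        (fun e he1 he2 => hnocommon e he1 he2)
    · intro hnil
      have := congrArg Walk.length hnil
      rw [hclen] at this
      simp only [Walk.length_nil] at this
      omega
    · have htail : c.support.tail = p1.support.tail ++ p2.support.tail := by
        rw [hcsupp, List.tail_append_of_ne_nil (Walk.support_ne_nil p1)]
      rw [htail]
      refine List.Nodup.append ?_ ?_ ?_
      · exact hp1path.support_nodup.sublist (List.tail_sublist _)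
      · exact hp2path.support_nodup.sublist (List.tail_sublist _)
      · intro z hz1 hz2
        have hz1' : z ∈ p1.support := List.mem_of_mem_tail hz1
        have hz2' : z ∈ p2.support := List.mem_of_mem_tail hz2
        rcases hinter z hz1' hz2' with rfl | rfl
        · exact hx_tail1 hz1
        · exact hy_tail2 hz2
  obtain ⟨u, v, hu, hv, hadj, hne⟩ := hchord c hcycle (by omega)
  have hmemc : ∀ w, w ∈ c.support → w ∈ p1.support ∨ w ∈ p2.support := by
    intro w hw
    rw [hcsupp] at hw
    rcases List.mem_append.mp hw with h | h
    · exact Or.inl h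
    · exact Or.inr (List.mem_of_mem_tail h)
  have case1 : u ∈ p1.support → v ∈ p1.support → False := by
    intro h1' h2'
    have : (Gr G (P ∪ {x, y})).Adj u v := ⟨hsupp1 u h1', hsupp1 v h2', hadj⟩
    have := no_chord_of_min_length p1 hp1min h1' h2' this
    exact hne (hcedges ▸ List.mem_append_left _ this)
  have case2 : u ∈ p2.support → v ∈ p2.support → False := by
    intro h1' h2'
    have : (Gr G (Q ∪ {x, y})).Adj u v := ⟨hsupp2 u h1', hsupp2 v h2', hadj⟩
    have := no_chord_of_min_length p2 hp2min h1' h2' this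
    exact hne (hcedges ▸ List.mem_append_right _ this)
  have cross : ∀ w w', w ∈ p1.support → w' ∈ p2.support → w ∉ p2.support → w' ∉ p1.support →
      G.Adj w w' → False := by
    intro w w' hw1 hw2 hw3 hw4 hadj'
    have hwP : w ∈ P := by
      have := hsupp1 w hw1
      simp only [Finset.mem_union, Finset.mem_insert, Finset.mem_singleton] at this
      rcases this with h | h | h
      · exact h
      · subst h; exact absurd p2.end_mem_support hw3
      · subst h; exact absurd p2.start_mem_support hw3
    have hw'Q : w' ∈ Q := by
      have := hsupp2 w' hw2
      simp only [Finset.mem_union, Finset.mem_insert, Finset.mem_singleton] at this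
      rcases this with h | h | h
      · exact h
      · subst h; exact absurd p1.start_mem_support hw4
      · subst h; exact absurd p1.end_mem_support hw4
    exact hPQ w hwP w' hw'Q hadj'
  rcases hmemc u hu with h1' | h1' <;> rcases hmemc v hv with h2' | h2'
  · exact case1 h1' h2'
  · by_cases hv1 : v ∈ p1.support
    · exact case1 h1' hv1
    · by_cases hu2 : u ∈ p2.support
      · exact case2 hu2 h2'
      · exact cross u v h1' h2' hu2 hv1 hadj
  · by_cases hu1 : u ∈ p1.support
    · exact case1 hu1 h2'
    · by_cases hv2 : v ∈ p2.support
      · exact case2 h1' hv2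
      · exact cross v u h2' h1' hv2 hu1 hadj.symm
  · exact case2 h1' h2'


lemma dirac (G : SimpleGraph V) (hchord : G.IsChordal) :
    ∀ (n : ℕ) (s : Finset V), s.card ≤ n →
      ∀ a ∈ s, ∀ b ∈ s, a ≠ b → ¬G.Adj a b →
        ∃ u ∈ s, ∃ w ∈ s, SimplicialIn G s u ∧ SimplicialIn G s w ∧ u ≠ w ∧ ¬G.Adj u w := by
  intro n
  induction n with
  | zero =>
    intro s hcard a ha
    rw [Nat.le_zero, Finset.card_eq_zero] at hcard
    subst hcard
    exact absurd ha (Finset.notMem_empty a)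
  | succ n ih =>
    intro s hcard a ha b hb hne hnadj
    classical
    set sepP : Finset V → Prop := fun S => S ⊆ s \ {a, b} ∧ ¬(Gr G (s \ S)).Reachable a b
      with hsepP
    have hsep0 : sepP (s \ {a, b}) := by
      refine ⟨Finset.Subset.refl _, ?_⟩
      rintro ⟨w⟩
      cases w with
      | nil => exact hne rfl
      | cons h q =>
        have hz := h.2.1
        simp only [Finset.mem_sdiff, Finset.mem_insert, Finset.mem_singleton, not_and,
          not_not] at hz
        have hzab := hz.2 hz.1
        rcases hzab with rfl | rfl
        · exact h.2.2.ne' rfl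
        · exact hnadj h.2.2
    -- minimum cardinality separator
    have hFne : ((s \ {a, b}).powerset.filter sepP).Nonempty :=
      ⟨s \ {a, b}, by rw [Finset.mem_filter, Finset.mem_powerset]; exact ⟨Finset.Subset.refl _, hsep0⟩⟩
    obtain ⟨S, hSF, hSmin⟩ := Finset.exists_min_image _ Finset.card hFne
    rw [Finset.mem_filter, Finset.mem_powerset] at hSF
    have hS1 : S ⊆ s \ {a, b} := hSF.1
    have hS1' : S ⊆ s \ {a, b} := hSF.2.1
    have hS2 : ¬(Gr G (s \ S)).Reachable a b := hSF.2.2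
    set t := s \ S with ht
    have haS : a ∉ S := fun h => by simpa using (hS1' h)
    have hbS : b ∉ S := fun h => by simpa using (hS1' h)
    have hat : a ∈ t := Finset.mem_sdiff.mpr ⟨ha, haS⟩
    have hbt : b ∈ t := Finset.mem_sdiff.mpr ⟨hb, hbS⟩
    set A := t.filter (fun z => (Gr G t).Reachable a z) with hA
    set B := t.filter (fun z => (Gr G t).Reachable b z) with hB
    have haA : a ∈ A := Finset.mem_filter.mpr ⟨hat, Reachable.refl a⟩
    have hbB : b ∈ B := Finset.mem_filter.mpr ⟨hbt, Reachable.refl b⟩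
    have hAt : A ⊆ t := Finset.filter_subset _ _
    have hBt : B ⊆ t := Finset.filter_subset _ _
    have hts : t ⊆ s := Finset.sdiff_subset
    have hclosA : ∀ u ∈ A, ∀ z ∈ t, G.Adj u z → z ∈ A := by
      intro u hu z hz hadj
      have hu' := Finset.mem_filter.mp hu
      exact Finset.mem_filter.mpr ⟨hz,
        hu'.2.trans (Adj.reachable ⟨hu'.1, hz, hadj⟩)⟩
    have hclosB : ∀ u ∈ B, ∀ z ∈ t, G.Adj u z → z ∈ B := by
      intro u hu z hz hadj
      have hu' := Finset.mem_filter.mp hu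
      exact Finset.mem_filter.mpr ⟨hz,
        hu'.2.trans (Adj.reachable ⟨hu'.1, hz, hadj⟩)⟩
    have hdisj : ∀ z, z ∈ A → z ∈ B → False := by
      intro z hzA hzB
      exact hS2 (((Finset.mem_filter.mp hzA).2).trans ((Finset.mem_filter.mp hzB).2).symm)
    have hAB_nadj : ∀ u ∈ A, ∀ v ∈ B, ¬G.Adj u v := by
      intro u hu v hv hadj
      exact hdisj v (hclosA u hu v (hBt hv) hadj) hv
    have hbA : b ∉ A := fun h => hS2 (Finset.mem_filter.mp h).2
    have haB : a ∉ B := fun h => hS2 ((Finset.mem_filter.mp h).2).symm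
    have hnbr : ∀ x ∈ S, (∃ u ∈ A, G.Adj x u) ∧ (∃ u ∈ B, G.Adj x u) := by
      intro x hx
      have hx' := Finset.mem_sdiff.mp (hS1 hx)
      have hxa : x ≠ a := fun h => hx'.2 (by simp [h])
      have hxb : x ≠ b := fun h => hx'.2 (by simp [h])
      set S' := S.erase x with hS'
      have hS'sep : ¬ sepP S' := by
        intro hsep
        have hmem : S' ∈ (s \ {a, b}).powerset.filter sepP := by
          rw [Finset.mem_filter, Finset.mem_powerset]
          exact ⟨(Finset.erase_subset _ _).trans hS1, hsep⟩
        have h1 := hSmin S' hmem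
        have hlt : S'.card < S.card := Finset.card_erase_lt_of_mem hx
        omega
      have hreach : (Gr G (s \ S')).Reachable a b := by
        simp only [hsepP] at hS'sep
        push_neg at hS'sep
        exact hS'sep ((Finset.erase_subset _ _).trans hS1)
      obtain ⟨w0⟩ := hreach
      set w := w0.bypass with hw
      have hwpath : w.IsPath := w0.bypass_isPath
      have hxw : x ∈ w.support := by
        by_contra hxw
        refine hS2 (Gr_reachable_transfer w ?_)
        intro z hz
        rcases Gr_support_mem' w z hz with rfl | hm
        · exact hat
        · have hzx : z ≠ x := fun h => hxw (h ▸ hz)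
          rw [Finset.mem_sdiff] at hm ⊢
          exact ⟨hm.1, fun hzS => hm.2 (Finset.mem_erase.mpr ⟨hzx, hzS⟩)⟩
      have hts' : ((s \ S').erase x) = t := by
        ext z
        simp only [Finset.mem_erase, Finset.mem_sdiff, ht, hS']
        constructor
        · rintro ⟨hzx, hzs, hz⟩
          exact ⟨hzs, fun hzS => hz ⟨hzx, hzS⟩⟩
        · rintro ⟨hzs, hz⟩
          have hzx : z ≠ x := fun h => hz (h ▸ hx)
          exact ⟨hzx, hzs, fun hmem => hz hmem.2⟩
      constructor
      · set p1 := w.takeUntil x hxw with hp1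
        have hp1path : p1.IsPath := hwpath.takeUntil hxw
        have hcount : p1.support.count x = 1 :=
          List.count_eq_one_of_mem hp1path.support_nodup p1.end_mem_support
        obtain ⟨u, hadj, hreachu⟩ := neighbor_extract p1 hxa.symm hcount
        rw [hts'] at hreachu
        have hut : u ∈ t := Gr_mem_of_reachable hat hreachu
        exact ⟨u, Finset.mem_filter.mpr ⟨hut, hreachu⟩, hadj⟩
      · set p2 := (w.dropUntil x hxw).reverse with hp2
        have hp2path : p2.IsPath := (hwpath.dropUntil hxw).reverse
        have hcount : p2.support.count x = 1 :=
          List.count_eq_one_of_mem hp2path.support_nodup (by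
            rw [hp2, Walk.support_reverse, List.mem_reverse]; exact Walk.start_mem_support _)
        obtain ⟨u, hadj, hreachu⟩ := neighbor_extract p2 hxb.symm hcount
        rw [hts'] at hreachu
        have hut : u ∈ t := Gr_mem_of_reachable hbt hreachu
        exact ⟨u, Finset.mem_filter.mpr ⟨hut, hreachu⟩, hadj⟩
    have hSclique : ∀ x ∈ S, ∀ y ∈ S, x ≠ y → G.Adj x y := by
      intro x hx y hy hxyne
      have hxt : x ∉ t := fun h => (Finset.mem_sdiff.mp h).2 hx
      have hyt : y ∉ t := fun h => (Finset.mem_sdiff.mp h).2 hy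
      have hxA : x ∉ A := fun h => hxt (hAt h)
      have hyA : y ∉ A := fun h => hyt (hAt h)
      have hxB : x ∉ B := fun h => hxt (hBt h)
      have hyB : y ∉ B := fun h => hyt (hBt h)
      obtain ⟨⟨ux, huxA, hadjux⟩, ⟨vx, hvxB, hadjvx⟩⟩ := hnbr x hx
      obtain ⟨⟨uy, huyA, hadjuy⟩, ⟨vy, hvyB, hadjvy⟩⟩ := hnbr y hy
      have hreachA : (Gr G (A ∪ {x, y})).Reachable x y := by
        have h1 : (Gr G t).Reachable ux uy :=
          ((Finset.mem_filter.mp huxA).2).symm.trans (Finset.mem_filter.mp huyA).2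
        obtain ⟨wA⟩ := h1
        have hsub : ∀ z ∈ wA.support, z ∈ A ∪ {x, y} := by
          intro z hz
          refine Finset.mem_union_left _ ?_
          have hrz : (Gr G t).Reachable a z :=
            ((Finset.mem_filter.mp huxA).2).trans ⟨wA.takeUntil z hz⟩
          have hzt : z ∈ t := by
            rcases Gr_support_mem' wA z hz with rfl | hm
            · exact hAt huxA
            · exact hm
          exact Finset.mem_filter.mpr ⟨hzt, hrz⟩
        have hmid := Gr_reachable_transfer wA hsub
        have e1 : (Gr G (A ∪ {x, y})).Adj x ux :=
          ⟨by simp, Finset.mem_union_left _ huxA, hadjux⟩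
        have e2 : (Gr G (A ∪ {x, y})).Adj y uy :=
          ⟨by simp, Finset.mem_union_left _ huyA, hadjuy⟩
        exact (e1.reachable.trans hmid).trans e2.reachable.symm
      have hreachB : (Gr G (B ∪ {x, y})).Reachable x y := by
        have h1 : (Gr G t).Reachable vx vy :=
          ((Finset.mem_filter.mp hvxB).2).symm.trans (Finset.mem_filter.mp hvyB).2
        obtain ⟨wB⟩ := h1
        have hsub : ∀ z ∈ wB.support, z ∈ B ∪ {x, y} := by
          intro z hz
          refine Finset.mem_union_left _ ?_
          have hrz : (Gr G t).Reachable b z :=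
            ((Finset.mem_filter.mp hvxB).2).trans ⟨wB.takeUntil z hz⟩
          have hzt : z ∈ t := by
            rcases Gr_support_mem' wB z hz with rfl | hm
            · exact hBt hvxB
            · exact hm
          exact Finset.mem_filter.mpr ⟨hzt, hrz⟩
        have hmid := Gr_reachable_transfer wB hsub
        have e1 : (Gr G (B ∪ {x, y})).Adj x vx :=
          ⟨by simp, Finset.mem_union_left _ hvxB, hadjvx⟩
        have e2 : (Gr G (B ∪ {x, y})).Adj y vy :=
          ⟨by simp, Finset.mem_union_left _ hvyB, hadjvy⟩
        exact (e1.reachable.trans hmid).trans e2.reachable.symm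
      exact adj_of_two_sides hchord hxyne hxA hyA hxB hyB hdisj hAB_nadj hreachA hreachB
    have hSs : S ⊆ s := fun z hz => (Finset.mem_sdiff.mp (hS1 hz)).1
    have key : ∀ (c : V) (C : Finset V), c ∈ C → C ⊆ t →
        (∀ u ∈ C, ∀ z ∈ t, G.Adj u z → z ∈ C) →
        (∃ w0 ∈ s, w0 ∉ C ∧ w0 ∉ S) →
        ∃ u ∈ C, SimplicialIn G s u := by
      intro c C hc hCt hclos hout
      set tC := C ∪ S with htC
      have htCs : tC ⊆ s := Finset.union_subset (hCt.trans hts) hSs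
      obtain ⟨w0, hw0s, hw0C, hw0S⟩ := hout
      have hcard' : tC.card ≤ n := by
        have hss : tC ⊂ s := (Finset.ssubset_iff_of_subset htCs).mpr
          ⟨w0, hw0s, by simp [htC, Finset.mem_union, hw0C, hw0S]⟩
        have h2 := Finset.card_lt_card hss
        omega
      have hnbhd : ∀ u ∈ C, ∀ x ∈ s, G.Adj u x → x ∈ tC := by
        intro u hu x hxs hadj
        by_cases hxS : x ∈ S
        · exact Finset.mem_union_right _ hxS
        · exact Finset.mem_union_left _ (hclos u hu x (Finset.mem_sdiff.mpr ⟨hxs, hxS⟩) hadj)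
      have lift : ∀ u ∈ C, SimplicialIn G tC u → SimplicialIn G s u := by
        intro u hu hsimp
        refine ⟨htCs hsimp.1, ?_⟩
        intro x hx y hy hax hay hxyne
        exact hsimp.2 x (hnbhd u hu x hx hax) y (hnbhd u hu y hy hay) hax hay hxyne
      by_cases hcomp : ∀ x ∈ tC, ∀ y ∈ tC, x ≠ y → G.Adj x y
      · exact ⟨c, hc, lift c hc ⟨Finset.mem_union_left _ hc,
          fun x hx y hy _ _ hxyne => hcomp x hx y hy hxyne⟩⟩
      · push_neg at hcomp
        obtain ⟨x0, hx0, y0, hy0, hx0y0, hnadj0⟩ := hcomp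
        obtain ⟨u, hu, w, hw, hsimpu, hsimpw, huw, hnadjuw⟩ :=
          ih tC hcard' x0 hx0 y0 hy0 hx0y0 hnadj0
        have hone : u ∈ C ∨ w ∈ C := by
          by_contra hno
          push_neg at hno
          have huS : u ∈ S := (Finset.mem_union.mp hu).resolve_left hno.1
          have hwS : w ∈ S := (Finset.mem_union.mp hw).resolve_left hno.2
          exact hnadjuw (hSclique u huS w hwS huw)
        rcases hone with h | h
        · exact ⟨u, h, lift u h hsimpu⟩
        · exact ⟨w, h, lift w h hsimpw⟩
    obtain ⟨uA, huA, hsimpA⟩ := key a A haA hAt hclosA ⟨b, hb, hbA, hbS⟩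
    obtain ⟨uB, huB, hsimpB⟩ := key b B hbB hBt hclosB ⟨a, ha, haB, haS⟩
    refine ⟨uA, hts (hAt huA), uB, hts (hBt huB), hsimpA, hsimpB, ?_, hAB_nadj uA huA uB huB⟩
    intro h
    exact hdisj uA huA (h ▸ huB)


omit [Fintype V] in
lemma conn_erase {G : SimpleGraph V} {s : Finset V} {v : V} (hsimp : SimplicialIn G s v)
    (hconn : ∀ x ∈ s, ∀ y ∈ s, (Gr G s).Reachable x y) :
    ∀ x ∈ s.erase v, ∀ y ∈ s.erase v, (Gr G (s.erase v)).Reachable x y := by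
  intro x hx y hy
  obtain ⟨p⟩ := hconn x (Finset.mem_of_mem_erase hx) y (Finset.mem_of_mem_erase hy)
  clear hconn
  have key : ∀ (n : ℕ) (x y : V), x ∈ s.erase v → y ∈ s.erase v →
      ∀ p : (Gr G s).Walk x y, p.length ≤ n → (Gr G (s.erase v)).Reachable x y := by
    intro n
    induction n with
    | zero =>
      intro x y _ _ p hp
      rw [Nat.le_zero] at hp
      exact (p.eq_of_length_eq_zero hp) ▸ Reachable.refl x
    | succ n ihn =>
      intro x y hx hy p hp
      cases p with
      | nil => exact Reachable.refl x
      | cons h q =>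
        rename_i z
        by_cases hz : z = v
        · subst z
          cases q with
          | nil => exact absurd rfl (Finset.ne_of_mem_erase hy)
          | cons h2 q2 =>
            rename_i w
            have hwv : w ≠ v := h2.2.2.ne'
            have hw : w ∈ s.erase v := Finset.mem_erase.mpr ⟨hwv, h2.2.1⟩
            have hq2 : q2.length ≤ n := by
              simp only [Walk.length_cons] at hp; omega
            by_cases hxw : x = w
            · subst hxw
              exact ihn x y hx hy q2 hq2
            · have hadj : G.Adj x w := hsimp.2 x h.1 w h2.2.1 h.2.2.symm h2.2.2 hxw
              have e : (Gr G (s.erase v)).Adj x w := ⟨hx, hw, hadj⟩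
              exact e.reachable.trans (ihn w y hw hy q2 hq2)
        · have hzmem : z ∈ s.erase v := Finset.mem_erase.mpr ⟨hz, h.2.1⟩
          have e : (Gr G (s.erase v)).Adj x z := ⟨hx, hzmem, h.2.2⟩
          exact e.reachable.trans (ihn z y hzmem hy q
            (by simp only [Walk.length_cons] at hp; omega))
  exact key p.length x y hx hy p le_rfl


lemma main (G : SimpleGraph V) (hchord : G.IsChordal) :
    ∀ (n : ℕ) (s : Finset V), s.card ≤ n → s.Nonempty →
      (∀ x ∈ s, ∀ y ∈ s, (Gr G s).Reachable x y) →
      ∃ L : List (Finset V), L ≠ [] ∧ L.Nodup ∧ (∀ C, C ∈ L ↔ MaxCliqueIn G s C) ∧ RIP L := by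
  intro n
  induction n with
  | zero =>
    intro s hcard hne
    rw [Nat.le_zero, Finset.card_eq_zero] at hcard
    exact absurd hcard (Finset.nonempty_iff_ne_empty.mp hne)
  | succ n ih =>
    intro s hcard hne hconn
    classical
    by_cases hcomp : ∀ x ∈ s, ∀ y ∈ s, x ≠ y → G.Adj x y
    · -- s is complete: unique maximal clique s
      refine ⟨[s], by simp, by simp, ?_, ?_⟩
      · intro C
        simp only [List.mem_singleton]
        constructor
        · rintro rfl
          refine ⟨Finset.Subset.refl _, ?_, fun D hD _ hsD => Finset.Subset.antisymm hsD hD⟩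
          intro x hx y hy hxy
          exact hcomp x hx y hy hxy
        · rintro ⟨hCs, hCcl, hmax⟩
          exact hmax s (Finset.Subset.refl _) (fun x hx y hy hxy => hcomp x hx y hy hxy) hCs
      · intro i hi h
        simp at h
        omega
    · -- not complete: find a simplicial vertex
      push_neg at hcomp
      obtain ⟨a, ha, b, hb, hab, hnadj⟩ := hcomp
      obtain ⟨v, hvs, -, -, hsimp, -, -, -⟩ :=
        dirac G hchord (n + 1) s hcard a ha b hb hab hnadj
      set s' := s.erase v with hs'
      have hcard2 : 2 ≤ s.card := Finset.one_lt_card.mpr ⟨a, ha, b, hb, hab⟩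
      have hcerase : s'.card = s.card - 1 := by
        rw [hs']; exact Finset.card_erase_of_mem hvs
      have hs'card : s'.card ≤ n := by omega
      have hs'ne : s'.Nonempty := by
        rw [← Finset.card_pos]
        omega
      obtain ⟨L', hL'ne, hL'nd, hL'mem, hL'rip⟩ :=
        ih s' hs'card hs'ne (conn_erase hsimp hconn)
      set K := s.filter (fun z => G.Adj v z) with hK
      have hvK : v ∉ K := fun h => G.irrefl (Finset.mem_filter.mp h).2
      have hKs' : K ⊆ s' := by
        intro z hz
        have hz' := Finset.mem_filter.mp hz
        exact Finset.mem_erase.mpr ⟨hz'.2.ne', hz'.1⟩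
      have hKcl : G.IsClique (K : Set V) := by
        intro x hx y hy hxy
        have hx' := Finset.mem_filter.mp hx
        have hy' := Finset.mem_filter.mp hy
        exact hsimp.2 x hx'.1 y hy'.1 hx'.2 hy'.2 hxy
      have hKvs : insert v K ⊆ s := by
        intro z hz
        rcases Finset.mem_insert.mp hz with rfl | hz
        · exact hvs
        · exact (Finset.mem_filter.mp hz).1
      have hKvcl : G.IsClique ((insert v K : Finset V) : Set V) := by
        rw [Finset.coe_insert]
        refine hKcl.insert ?_
        intro z hz hzv
        exact (Finset.mem_filter.mp hz).2
      have hmaxKv : MaxCliqueIn G s (insert v K) := by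
        refine ⟨hKvs, hKvcl, ?_⟩
        intro D hDs hDcl hsub
        refine Finset.Subset.antisymm hsub ?_
        intro z hz
        by_cases hzv : z = v
        · exact hzv ▸ Finset.mem_insert_self v K
        · have : G.Adj v z := hDcl (hsub (Finset.mem_insert_self v K)) hz (Ne.symm hzv)
          exact Finset.mem_insert_of_mem (Finset.mem_filter.mpr ⟨hDs hz, this⟩)
      have huniq : ∀ C, MaxCliqueIn G s C → v ∈ C → C = insert v K := by
        intro C hC hvC
        refine hC.2.2 (insert v K) hKvs hKvcl ?_
        intro z hz
        by_cases hzv : z = v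
        · exact hzv ▸ Finset.mem_insert_self v K
        · have : G.Adj v z := hC.2.1 hvC hz (Ne.symm hzv)
          exact Finset.mem_insert_of_mem (Finset.mem_filter.mpr ⟨hC.1 hz, this⟩)
      have hdown : ∀ C, MaxCliqueIn G s C → v ∉ C → MaxCliqueIn G s' C := by
        intro C hC hvC
        refine ⟨fun z hz => Finset.mem_erase.mpr ⟨fun h => hvC (h ▸ hz), hC.1 hz⟩, hC.2.1, ?_⟩
        intro D hDs hDcl hsub
        exact hC.2.2 D (hDs.trans (Finset.erase_subset _ _)) hDcl hsub
      have hsubK : ∀ C, MaxCliqueIn G s' C → C ⊆ K → C = K := by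
        intro C hC hCK
        exact hC.2.2 K hKs' hKcl hCK
      have hlift : ∀ C, MaxCliqueIn G s' C → ¬(C ⊆ K) → MaxCliqueIn G s C := by
        intro C hC hCK
        refine ⟨hC.1.trans (Finset.erase_subset _ _), hC.2.1, ?_⟩
        intro D hDs hDcl hsub
        by_cases hvD : v ∈ D
        · exfalso
          have hCD' : C ⊆ D.erase v := by
            intro z hz
            exact Finset.mem_erase.mpr ⟨fun h => (Finset.mem_erase.mp (hC.1 hz)).1 h, hsub hz⟩
          have hD'cl : G.IsClique ((D.erase v : Finset V) : Set V) :=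
            hDcl.subset (by rw [Finset.coe_erase]; exact Set.diff_subset)
          have hD's : D.erase v ⊆ s' := fun z hz =>
            Finset.mem_erase.mpr ⟨(Finset.mem_erase.mp hz).1, hDs (Finset.mem_of_mem_erase hz)⟩
          have hCeq : C = D.erase v := hC.2.2 _ hD's hD'cl hCD'
          refine hCK ?_
          intro z hz
          rw [hCeq] at hz
          have hz' := Finset.mem_erase.mp hz
          have : G.Adj v z := hDcl hvD (hz'.2) (Ne.symm hz'.1)
          exact Finset.mem_filter.mpr ⟨hDs hz'.2, this⟩
        · have hDs' : D ⊆ s' := fun z hz =>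
            Finset.mem_erase.mpr ⟨fun h => hvD (h ▸ hz), hDs hz⟩
          exact hC.2.2 D hDs' hDcl hsub
      have hvnotmem : ∀ C ∈ L', v ∉ C := by
        intro C hC hvC
        have := ((hL'mem C).mp hC).1 hvC
        exact (Finset.mem_erase.mp this).1 rfl
      have hKnotmax : ¬ MaxCliqueIn G s K := by
        intro h
        have heq := h.2.2 (insert v K) hKvs hKvcl (Finset.subset_insert _ _)
        have hv2 : v ∈ K := by rw [heq]; exact Finset.mem_insert_self v K
        exact hvK hv2
      by_cases hKmax : MaxCliqueIn G s' K
      · -- Case A: K is a maximal clique of s'; replace it with insert v K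
        have hKL' : K ∈ L' := (hL'mem K).mpr hKmax
        have hj0 : L'.idxOf K < L'.length := List.idxOf_lt_length_iff.mpr hKL'
        set j0 := L'.idxOf K with hj0def
        have hL'j0 : L'[j0]'hj0 = K := List.getElem_idxOf hj0
        have hLlen : (L'.set j0 (insert v K)).length = L'.length := by
          rw [List.length_set]
        have hgetne : ∀ i (h : i < L'.length), i ≠ j0 →
            (L'.set j0 (insert v K))[i]'(by rw [List.length_set]; exact h) = L'[i]'h := by
          intro i h hne'
          rw [List.getElem_set, if_neg (Ne.symm hne')]
        have hgeteq : (L'.set j0 (insert v K))[j0]'(by rw [List.length_set]; exact hj0)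
            = insert v K := by
          rw [List.getElem_set, if_pos rfl]
        set L := L'.set j0 (insert v K) with hLdef
        have hvout : ∀ i (h : i < L'.length), v ∉ L'[i]'h :=
          fun i h => hvnotmem _ (List.getElem_mem h)
        have hmemL' : ∀ i (h : i < L'.length), MaxCliqueIn G s' (L'[i]'h) :=
          fun i h => (hL'mem _).mp (List.getElem_mem h)
        have hinj := List.nodup_iff_injective_getElem.mp hL'nd
        refine ⟨L, ?_, ?_, ?_, ?_⟩
        · intro h
          rw [h] at hLlen
          simp only [List.length_nil] at hLlen
          exact hL'ne (List.length_eq_zero_iff.mp hLlen.symm)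
        · rw [List.nodup_iff_injective_getElem]
          rintro ⟨i, hi⟩ ⟨i', hi'⟩ hEq
          simp only at hEq
          have hi2 : i < L'.length := by omega
          have hi'2 : i' < L'.length := by omega
          by_cases h1 : i = j0 <;> by_cases h2 : i' = j0
          · subst h1; subst h2; rfl
          · exfalso
            subst h1
            rw [hgeteq, hgetne i' hi'2 h2] at hEq
            exact hvout i' hi'2 (hEq ▸ Finset.mem_insert_self v K)
          · exfalso
            subst h2
            rw [hgeteq, hgetne i hi2 h1] at hEq
            exact hvout i hi2 (hEq.symm ▸ Finset.mem_insert_self v K)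
          · rw [hgetne i hi2 h1, hgetne i' hi'2 h2] at hEq
            have := hinj (a₁ := ⟨i, hi2⟩) (a₂ := ⟨i', hi'2⟩) hEq
            simpa using this
        · intro C
          constructor
          · intro hC
            obtain ⟨i, hi, hiC⟩ := List.mem_iff_getElem.mp hC
            by_cases h1 : i = j0
            · subst h1
              rw [hgeteq] at hiC
              exact hiC ▸ hmaxKv
            · have hi2 : i < L'.length := by omega
              rw [hgetne i hi2 h1] at hiC
              have hmax' := hmemL' i hi2
              rw [hiC] at hmax'
              refine hlift C hmax' ?_
              intro hsub
              have hCeqK := hsubK C hmax' hsub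
              apply h1
              have hEq2 : L'[i]'hi2 = L'[j0]'hj0 := by rw [hiC, hCeqK, hL'j0]
              have := hinj (a₁ := ⟨i, hi2⟩) (a₂ := ⟨j0, hj0⟩) hEq2
              simpa using this
          · intro hC
            by_cases hvC : v ∈ C
            · have hCeq := huniq C hC hvC
              refine List.mem_iff_getElem.mpr ⟨j0, by omega, ?_⟩
              rw [hgeteq, hCeq]
            · have hC' := hdown C hC hvC
              have hCL' : C ∈ L' := (hL'mem C).mpr hC'
              obtain ⟨i, hi, hiC⟩ := List.mem_iff_getElem.mp hCL'
              have hij0 : i ≠ j0 := by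
                intro h
                subst h
                rw [hL'j0] at hiC
                exact hKnotmax (hiC ▸ hC)
              exact List.mem_iff_getElem.mpr ⟨i, by omega,
                by rw [hgetne i hi hij0]; exact hiC⟩
        · intro i hi h
          have hiL' : i < L'.length := by omega
          obtain ⟨j, hj, hcov⟩ := hL'rip i hi hiL'
          refine ⟨j, hj, ?_⟩
          intro m hm
          have hmL' : m < L'.length := by omega
          have hjL' : j < L'.length := by omega
          intro z hz
          rw [Finset.mem_inter] at hz
          obtain ⟨hzi, hzm⟩ := hz
          have himne : i ≠ m := by omega
          -- z is in L'[i]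
          have hzi' : z ∈ L'[i]'hiL' := by
            by_cases h1 : i = j0
            · have heqi : L[i]'(by omega) = insert v K := by subst h1; exact hgeteq
              have hzin : z ∈ insert v K := by rw [← heqi]; exact hzi
              rcases Finset.mem_insert.mp hzin with rfl | hzK
              · exfalso
                have hm1 : m ≠ j0 := by omega
                rw [hgetne m hmL' hm1] at hzm
                exact hvout m hmL' hzm
              · have heq2 : L'[i]'hiL' = K := by subst h1; exact hL'j0
                rw [heq2]
                exact hzK
            · rwa [hgetne i hiL' h1] at hzi
          have hzm' : z ∈ L'[m]'hmL' := by
            by_cases h1 : m = j0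
            · have heqm : L[m]'(by omega) = insert v K := by subst h1; exact hgeteq
              have hzin : z ∈ insert v K := by rw [← heqm]; exact hzm
              rcases Finset.mem_insert.mp hzin with rfl | hzK
              · exfalso
                have hi1 : i ≠ j0 := by omega
                rw [hgetne i hiL' hi1] at hzi
                exact hvout i hiL' hzi
              · have heq2 : L'[m]'hmL' = K := by subst h1; exact hL'j0
                rw [heq2]
                exact hzK
            · rwa [hgetne m hmL' h1] at hzm
          have hzj : z ∈ L'[j]'hjL' := hcov m hm (Finset.mem_inter.mpr ⟨hzi', hzm'⟩)
          by_cases h1 : j = j0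
          · have heqj : L[j]'(by omega) = insert v K := by subst h1; exact hgeteq
            have heq2 : L'[j]'hjL' = K := by subst h1; exact hL'j0
            rw [heq2] at hzj
            exact Eq.mpr (congrArg (fun t => z ∈ t) heqj) (Finset.mem_insert_of_mem hzj)
          · rw [hgetne j hjL' h1]
            exact hzj
      · -- Case B: K is not maximal in s'; append insert v K as a new leaf
        obtain ⟨D, hDmax, hKD⟩ := exists_maxCliqueIn_superset G hKs' hKcl
        have hDL' : D ∈ L' := (hL'mem D).mpr hDmax
        have hj0 : L'.idxOf D < L'.length := List.idxOf_lt_length_iff.mpr hDL'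
        have hL'j0 : L'[L'.idxOf D]'hj0 = D := List.getElem_idxOf hj0
        have hvins : insert v K ∉ L' := fun h => hvnotmem _ h (Finset.mem_insert_self v K)
        have hvout : ∀ i (h : i < L'.length), v ∉ L'[i]'h :=
          fun i h => hvnotmem _ (List.getElem_mem h)
        refine ⟨L' ++ [insert v K], by simp, ?_, ?_, ?_⟩
        · rw [List.nodup_append]
          refine ⟨hL'nd, List.nodup_singleton _, ?_⟩
          intro x hx y hy hxy
          rw [List.mem_singleton] at hy
          exact hvins (hy ▸ hxy ▸ hx)
        · intro C
          rw [List.mem_append, List.mem_singleton]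
          constructor
          · rintro (hC | rfl)
            · have hC' := (hL'mem C).mp hC
              refine hlift C hC' ?_
              intro hsub
              exact hKmax ((hsubK C hC' hsub) ▸ hC')
            · exact hmaxKv
          · intro hC
            by_cases hvC : v ∈ C
            · exact Or.inr (huniq C hC hvC)
            · exact Or.inl ((hL'mem C).mpr (hdown C hC hvC))
        · intro i hi h
          rw [List.length_append, List.length_singleton] at h
          by_cases hiL : i < L'.length
          · obtain ⟨j, hj, hcov⟩ := hL'rip i hi hiL
            refine ⟨j, hj, ?_⟩
            intro m hm
            have hmL' : m < L'.length := by omega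
            have hjL' : j < L'.length := by omega
            rw [List.getElem_append_left hiL, List.getElem_append_left hmL',
              List.getElem_append_left hjL']
            exact hcov m hm
          · have hiEq : i = L'.length := by omega
            refine ⟨L'.idxOf D, by omega, ?_⟩
            intro m hm
            have hmL' : m < L'.length := by omega
            have e1 : (L' ++ [insert v K])[i]'(by rw [List.length_append]; simp; omega)
                = insert v K := by
              exact List.getElem_concat_length hiEq _
            rw [e1, List.getElem_append_left hmL', List.getElem_append_left hj0, hL'j0]
            intro z hz
            rw [Finset.mem_inter] at hz
            obtain ⟨hz1, hz2⟩ := hz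
            rcases Finset.mem_insert.mp hz1 with rfl | hzK
            · exact absurd hz2 (hvout m hmL')
            · exact hKD hzK



lemma tree_of_rip (G : SimpleGraph V) (L : List (Finset V)) (hLne : L ≠ [])
    (hLnd : L.Nodup) (hmem : ∀ C, C ∈ L ↔ G.IsMaxClique C) (hLrip : RIP L) :
    ∃ T : SimpleGraph {C : Finset V // G.IsMaxClique C},
      T.IsTree ∧
        ∀ (C C' : {C : Finset V // G.IsMaxClique C}) (p : T.Walk C C'), p.IsPath →
          ∀ C'' ∈ p.support, C.1 ∩ C'.1 ⊆ C''.1 := by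
  classical
  have hk : 0 < L.length := List.length_pos_iff.mpr hLne
  choose! par hparlt hparcov using hLrip
  have hidxlt0 : ∀ C : {C : Finset V // G.IsMaxClique C}, L.idxOf C.1 < L.length :=
    fun C => List.idxOf_lt_length_iff.mpr ((hmem C.1).mpr C.2)
  set idx : {C : Finset V // G.IsMaxClique C} → ℕ := fun C => L.idxOf C.1 with hidxdef
  have hidxlt : ∀ C, idx C < L.length := hidxlt0
  have hidxget : ∀ C, L[idx C]'(hidxlt C) = C.1 :=
    fun C => List.getElem_idxOf (hidxlt C)
  have hinj := List.nodup_iff_injective_getElem.mp hLnd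
  have hidxinj : ∀ C C', idx C = idx C' → C = C' := by
    intro C C' h
    apply Subtype.ext
    rw [← hidxget C, ← hidxget C']
    congr 1
  have vtxP : ∀ i, ∀ h : i < L.length,
      ∃ D : {C : Finset V // G.IsMaxClique C}, D.1 = L[i]'h :=
    fun i h => ⟨⟨L[i]'h, (hmem _).mp (List.getElem_mem h)⟩, rfl⟩
  choose vtx hvtx1 using vtxP
  have hidxvtx : ∀ i (h : i < L.length), idx (vtx i h) = i := by
    intro i h
    have h1 : L[idx (vtx i h)]'(hidxlt _) = L[i]'h := by
      rw [hidxget (vtx i h)]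
      exact hvtx1 i h
    have h2 := hinj (a₁ := ⟨idx (vtx i h), hidxlt _⟩) (a₂ := ⟨i, h⟩) h1
    simpa using h2
  set T : SimpleGraph {C : Finset V // G.IsMaxClique C} := {
    Adj := fun C C' =>
      (idx C = par (idx C') ∧ 0 < idx C') ∨ (idx C' = par (idx C) ∧ 0 < idx C)
    symm := by
      constructor
      intro C C' h
      rcases h with h | h
      · exact Or.inr h
      · exact Or.inl h
    loopless := by
      constructor
      intro C h
      rcases h with ⟨h1, h2⟩ | ⟨h1, h2⟩ <;>
        exact absurd h1 (by have := hparlt (idx C) h2 (hidxlt C); omega)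
  } with hT
  have hadjiff : ∀ C C', T.Adj C C' ↔
      ((idx C = par (idx C') ∧ 0 < idx C') ∨ (idx C' = par (idx C) ∧ 0 < idx C)) := by
    intro C C'
    rw [hT]
  -- connectivity
  have hreach0 : ∀ C, T.Reachable C (vtx 0 hk) := by
    have key : ∀ n C, idx C = n → T.Reachable C (vtx 0 hk) := by
      intro n
      induction n using Nat.strong_induction_on with
      | _ n ihn =>
        intro C hCn
        subst hCn
        by_cases h0 : idx C = 0
        · have hCeq : C = vtx 0 hk := hidxinj _ _ (by rw [h0, hidxvtx])
          exact hCeq ▸ Reachable.refl _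
        · have hpos : 0 < idx C := Nat.pos_of_ne_zero h0
          have hlt := hparlt (idx C) hpos (hidxlt C)
          have hparval : par (idx C) < L.length := by have := hidxlt C; omega
          have hadj : T.Adj C (vtx (par (idx C)) hparval) := by
            rw [hadjiff]
            right
            rw [hidxvtx]
            exact ⟨rfl, hpos⟩
          exact hadj.reachable.trans
            (ihn (par (idx C)) (by omega) (vtx (par (idx C)) hparval) (hidxvtx _ _))
    exact fun C => key (idx C) C rfl
  have hconnT : T.Connected := by
    rw [connected_iff]
    exact ⟨fun C C' => (hreach0 C).trans (hreach0 C').symm, ⟨vtx 0 hk⟩⟩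
  -- acyclicity
  have hacyc : T.IsAcyclic := by
    intro Cv c hc
    obtain ⟨Cm, hCmmem0, hCmmax0⟩ := Finset.exists_max_image c.support.toFinset idx
      ⟨Cv, List.mem_toFinset.mpr c.start_mem_support⟩
    rw [List.mem_toFinset] at hCmmem0
    have hCmmax' : ∀ D ∈ c.support, idx D ≤ idx Cm := fun D hD =>
      hCmmax0 D (List.mem_toFinset.mpr hD)
    have hc'cyc : (c.rotate Cm hCmmem0).IsCycle := hc.rotate hCmmem0
    have hsupp : ∀ D ∈ (c.rotate Cm hCmmem0).support, idx D ≤ idx Cm := by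
      intro D hD
      rw [(c.rotate Cm hCmmem0).support_eq_cons] at hD
      rcases List.mem_cons.mp hD with rfl | hD
      · exact le_refl _
      · have hperm := Walk.support_rotate c Cm hCmmem0
        have : D ∈ c.support.tail := hperm.mem_iff.mp hD
        exact hCmmax' D (List.mem_of_mem_tail this)
    set c' := c.rotate Cm hCmmem0 with hc'def
    clear_value c'
    clear hc'def hc hCmmem0 hCmmax0 hCmmax'
    cases c' with
    | nil => exact hc'cyc.ne_nil rfl
    | cons hadj q =>
      rename_i C2
      rw [Walk.cons_isCycle_iff] at hc'cyc
      obtain ⟨hqpath, hedge⟩ := hc'cyc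
      have hC2Cm : C2 ≠ Cm := hadj.ne'
      obtain ⟨Cp, hadj2, q2, hq2eq⟩ := Walk.exists_eq_cons_of_ne hC2Cm.symm q.reverse
      have hC2le : idx C2 ≤ idx Cm := hsupp C2
        (by rw [Walk.support_cons]; exact List.mem_cons_of_mem _ q.start_mem_support)
      have hCple : idx Cp ≤ idx Cm := by
        refine hsupp Cp ?_
        rw [Walk.support_cons]
        refine List.mem_cons_of_mem _ ?_
        have h1 : Cp ∈ q.reverse.support := by
          rw [hq2eq, Walk.support_cons]
          exact List.mem_cons_of_mem _ q2.start_mem_support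
        rwa [Walk.support_reverse, List.mem_reverse] at h1
      have hfirst : idx C2 = par (idx Cm) ∧ 0 < idx Cm := by
        rcases (hadjiff _ _).mp hadj with ⟨h1, h2⟩ | ⟨h1, h2⟩
        · exfalso; have := hparlt (idx C2) h2 (hidxlt C2); omega
        · exact ⟨h1, h2⟩
      have hlast : idx Cp = par (idx Cm) := by
        rcases (hadjiff _ _).mp hadj2 with ⟨h1, h2⟩ | ⟨h1, h2⟩
        · exfalso; have := hparlt (idx Cp) h2 (hidxlt Cp); omega
        · exact h1
      have hC2Cp : Cp = C2 := hidxinj _ _ (hlast.trans hfirst.1.symm)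
      subst hC2Cp
      have hqrevpath : q.reverse.IsPath := hqpath.reverse
      rw [hq2eq, Walk.cons_isPath_iff] at hqrevpath
      obtain ⟨hq2path, hCmq2⟩ := hqrevpath
      cases q2 with
      | nil =>
        -- q is a single edge C2 - Cm; its edge is s(Cm, C2)
        apply hedge
        have h1 : s(Cm, Cp) ∈ q.reverse.edges := by
          rw [hq2eq, Walk.edges_cons]
          exact List.mem_cons_self
        rw [Walk.edges_reverse, List.mem_reverse] at h1
        exact h1
      | cons h3 q3 =>
        rename_i C4
        have hnodup := hq2path.support_nodup
        rw [Walk.support_cons, List.nodup_cons] at hnodup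
        exact hnodup.1 q3.end_mem_support
  -- the clique-intersection property
  refine ⟨T, ⟨hconnT, hacyc⟩, ?_⟩
  intro C C' p hp C'' hC''
  intro z hz
  rw [Finset.mem_inter] at hz
  obtain ⟨hzC, hzC'⟩ := hz
  obtain ⟨C0, hC0mem, hC0min⟩ := Finset.exists_min_image
    (Finset.univ.filter (fun D : {C : Finset V // G.IsMaxClique C} => z ∈ D.1)) idx
    ⟨C, Finset.mem_filter.mpr ⟨Finset.mem_univ _, hzC⟩⟩
  have hzC0 : z ∈ C0.1 := (Finset.mem_filter.mp hC0mem).2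
  have hmin : ∀ D, z ∈ D.1 → idx C0 ≤ idx D := fun D hD =>
    hC0min D (Finset.mem_filter.mpr ⟨Finset.mem_univ _, hD⟩)
  have climb : ∀ n D, z ∈ D.1 → idx D = n →
      ∃ w : T.Walk D C0, ∀ E ∈ w.support, z ∈ E.1 := by
    intro n
    induction n using Nat.strong_induction_on with
    | _ n ihn =>
      intro D hzD hDn
      subst hDn
      by_cases hD0 : D = C0
      · subst hD0
        exact ⟨Walk.nil, by intro E hE; rw [Walk.support_nil] at hE; simp at hE; subst hE; exact hzD⟩
      · have hlt0 : idx C0 < idx D := by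
          have h1 := hmin D hzD
          have h2 : idx C0 ≠ idx D := fun h => hD0 (hidxinj _ _ h).symm
          omega
        have hpos : 0 < idx D := by omega
        have hparval : par (idx D) < L.length := by
          have := hparlt (idx D) hpos (hidxlt D); have := hidxlt D; omega
        set P := vtx (par (idx D)) hparval with hPdef
        have hzP : z ∈ P.1 := by
          have hcov := hparcov (idx D) hpos (hidxlt D) (idx C0) hlt0
          have hz1 : z ∈ (L[idx D]'(hidxlt D)) ∩ (L[idx C0]'(hidxlt C0)) := by
            rw [Finset.mem_inter, hidxget, hidxget]
            exact ⟨hzD, hzC0⟩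
          have := hcov hz1
          rw [hPdef, hvtx1]
          exact this
        have hadj : T.Adj D P := by
          rw [hadjiff]
          right
          rw [hPdef, hidxvtx]
          exact ⟨rfl, hpos⟩
        obtain ⟨w, hw⟩ := ihn (par (idx D))
          (by have := hparlt (idx D) hpos (hidxlt D); omega) P hzP (by rw [hPdef, hidxvtx])
        refine ⟨Walk.cons hadj w, ?_⟩
        intro E hE
        rw [Walk.support_cons] at hE
        rcases List.mem_cons.mp hE with rfl | hE
        · exact hzD
        · exact hw E hE
  obtain ⟨w1, hw1⟩ := climb (idx C) C hzC rfl
  obtain ⟨w2, hw2⟩ := climb (idx C') C' hzC' rfl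
  have hfull : ∀ E ∈ (w1.append w2.reverse).support, z ∈ E.1 := by
    intro E hE
    rcases (Walk.mem_support_append_iff w1 w2.reverse).mp hE with h | h
    · exact hw1 E h
    · rw [Walk.support_reverse, List.mem_reverse] at h
      exact hw2 E h
  have hbp : (w1.append w2.reverse).bypass.IsPath := Walk.bypass_isPath _
  have hpeq : p = (w1.append w2.reverse).bypass := by
    have := hacyc.path_unique ⟨p, hp⟩ ⟨(w1.append w2.reverse).bypass, hbp⟩
    exact congrArg Subtype.val this
  have hsub := Walk.support_bypass_subset (w1.append w2.reverse)
  rw [hpeq] at hC''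
  exact hfull C'' (hsub hC'')


end CliqueTree

/-- Every finite connected chordal graph has a clique tree: a tree on its maximal cliques
with the clique intersection property, i.e., for any two maximal cliques `C`, `C'`, their
intersection is contained in every maximal clique on the (unique) path between them. -/
theorem exists_clique_tree (V : Type*) [Fintype V] [DecidableEq V] (G : SimpleGraph V)
    (hconn : G.Connected) (hchord : G.IsChordal) :
    ∃ T : SimpleGraph {C : Finset V // G.IsMaxClique C},
      T.IsTree ∧
        ∀ (C C' : {C : Finset V // G.IsMaxClique C}) (p : T.Walk C C'), p.IsPath →
          ∀ C'' ∈ p.support, C.1 ∩ C'.1 ⊆ C''.1 := by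
  classical
  have hGr : CliqueTree.Gr G Finset.univ = G := by
    ext x y
    simp [CliqueTree.Gr]
  have hV : Nonempty V := hconn.nonempty
  have hne' : (Finset.univ : Finset V).Nonempty := Finset.univ_nonempty
  have hconn' : ∀ x ∈ (Finset.univ : Finset V), ∀ y ∈ (Finset.univ : Finset V),
      (CliqueTree.Gr G Finset.univ).Reachable x y := by
    intro x _ y _
    rw [hGr]
    exact hconn.preconnected x y
  obtain ⟨L, hLne, hLnd, hLmem, hLrip⟩ :=
    CliqueTree.main G hchord Finset.univ.card Finset.univ le_rfl hne' hconn'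
  have hmem' : ∀ C, C ∈ L ↔ G.IsMaxClique C := by
    intro C
    rw [hLmem]
    constructor
    · rintro ⟨_, hcl, hmax⟩
      exact ⟨hcl, fun D hD hsub => hmax D (Finset.subset_univ _) hD hsub⟩
    · rintro ⟨hcl, hmax⟩
      exact ⟨Finset.subset_univ _, hcl, fun D _ hD hsub => hmax D hD hsub⟩
  exact CliqueTree.tree_of_rip G L hLne hLnd hmem' hLrip
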